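/- There is a bijection between the set of ν-Schröder trees and the set of ν-Schröder paths, given by the left-flushing and right-flushing maps. -/
import Mathlib


/-- Steps of a (Schröder) lattice path: north, east, diagonal. -/
inductive Step : Type
  | N | E | D
deriving DecidableEq, Repr

/-- Total horizontal displacement of a path. -/
def eLen (p : List Step) : ℕ := p.count Step.E + p.count Step.D

/-- Total vertical displacement of a path. -/
def nLen (p : List Step) : ℕ := p.count Step.N + p.count Step.D

/-- A lattice path uses only `N` and `E` steps. -/
def IsLatticePath (ν : List Step) : Prop := Step.D ∉ ν

/-- `colVal p x` is twice the starting height of the step of `p` crossing the vertical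
strip between abscissas `x` and `x+1`, plus `1` if that step is diagonal.  Comparing these
values columnwise is equivalent to comparing the heights of the paths over each strip. -/
def colVal : List Step → ℕ → ℕ
  | [], _ => 0
  | Step.N :: p, x => colVal p x + 2
  | Step.E :: _, 0 => 0
  | Step.E :: p, x+1 => colVal p x
  | Step.D :: _, 0 => 1
  | Step.D :: p, x+1 => colVal p x + 2

/-- `π` stays weakly above `ρ` (same endpoints intended). -/
def WeaklyAbove (π ρ : List Step) : Prop := ∀ x, colVal ρ x ≤ colVal π x

/-- Replace every peak (consecutive `NE`) of a path by a diagonal step; applied to `ν`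
this gives the path `μ` of the large ν-Schröder path definition. -/
def cutPeaks : List Step → List Step
  | [] => []
  | Step.N :: Step.E :: p => Step.D :: cutPeaks p
  | s :: p => s :: cutPeaks p

/-- A ν-Dyck path: an `N,E` path with the same endpoints as `ν` staying weakly above `ν`. -/
def IsNuDyck (ν π : List Step) : Prop :=
  Step.D ∉ π ∧ eLen π = eLen ν ∧ nLen π = nLen ν ∧ WeaklyAbove π ν

/-- A (small) ν-Schröder path: an `N,E,D` path with the same endpoints as `ν` staying weakly
above `ν` (this automatically forbids diagonal steps on the ν-diagonal). -/
def IsSmallSchroder (ν π : List Step) : Prop :=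
  eLen π = eLen ν ∧ nLen π = nLen ν ∧ WeaklyAbove π ν

/-- A large ν-Schröder path: an `N,E,D` path with the same endpoints as `ν` staying weakly
above the path obtained from `ν` by replacing each peak by a diagonal step. -/
def IsLargeSchroder (ν π : List Step) : Prop :=
  eLen π = eLen ν ∧ nLen π = nLen ν ∧ WeaklyAbove π (cutPeaks ν)

/-- Number of peaks (consecutive `NE` pairs). -/
def peaks (p : List Step) : ℕ := (p.zip p.tail).count (Step.N, Step.E)

/-- Number of valleys (consecutive `EN` pairs). -/
def valleys (p : List Step) : ℕ := (p.zip p.tail).count (Step.E, Step.N)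

/-- Lattice points at which valleys of a path occur (starting the path at `(x,y)`). -/
def valleyPts : List Step → ℕ → ℕ → List (ℕ × ℕ)
  | [], _, _ => []
  | Step.E :: p, x, y =>
      (if p.head? = some Step.N then [(x+1, y)] else []) ++ valleyPts p (x+1) y
  | Step.N :: p, x, y => valleyPts p x (y+1)
  | Step.D :: p, x, y => valleyPts p (x+1) (y+1)

/-- Lattice points at which high peaks (peaks strictly above `ν`) of a path occur. -/
def highPeakPts (ν : List Step) : List Step → ℕ → ℕ → List (ℕ × ℕ)
  | [], _, _ => []
  | Step.N :: p, x, y =>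
      (if p.head? = some Step.E ∧ colVal ν x < 2*(y+1) then [(x, y+1)] else []) ++
        highPeakPts ν p x (y+1)
  | Step.E :: p, x, y => highPeakPts ν p (x+1) y
  | Step.D :: p, x, y => highPeakPts ν p (x+1) (y+1)

/-- Number of high peaks of `π` relative to `ν`. -/
def highPeaks (ν π : List Step) : ℕ := (highPeakPts ν π 0 0).length

/-- j-th ν-Narayana number: number of ν-Dyck paths with exactly `j` valleys. -/
noncomputable def Nar (ν : List Step) (j : ℕ) : ℕ :=
  Nat.card {π : List Step // IsNuDyck ν π ∧ valleys π = j}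

/-- Number of small ν-Schröder paths with exactly `i` diagonal steps. -/
noncomputable def schNum (ν : List Step) (i : ℕ) : ℕ :=
  Nat.card {π : List Step // IsSmallSchroder ν π ∧ π.count Step.D = i}

/-- `lowH ν x` is the lowest height of a point of `ν` at abscissa `x`. -/
def lowH : List Step → ℕ → ℕ
  | _, 0 => 0
  | [], _+1 => 0
  | Step.N :: p, x+1 => lowH p (x+1) + 1
  | Step.E :: p, x+1 => lowH p x
  | Step.D :: p, x+1 => lowH p x + 1

/-- The lowest lattice path from `(0,0)` to `(b,a)` weakly above the line segment
from `(0,0)` to `(b,a)`. -/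
def nuAB (a b : ℕ) : List Step :=
  (List.range b).flatMap (fun x =>
    List.replicate (((x+1)*a + b - 1)/b - (x*a + b - 1)/b) Step.N ++ [Step.E])

/-- Number of large rational `(a,b)`-Schröder paths with `i` diagonal steps. -/
noncomputable def largeCount (a b i : ℕ) : ℕ :=
  Nat.card {π : List Step // IsLargeSchroder (nuAB a b) π ∧ π.count Step.D = i}

/-- Number of small rational `(a,b)`-Schröder paths with `i` diagonal steps. -/
noncomputable def smallCount (a b i : ℕ) : ℕ :=
  Nat.card {π : List Step // IsSmallSchroder (nuAB a b) π ∧ π.count Step.D = i}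

/-- Binomial coefficient with an integer lower entry (zero when negative). -/
def chooseZ (n : ℕ) (k : ℤ) : ℕ := if 0 ≤ k then n.choose k.toNat else 0

/-- The region weakly above `ν` in the rectangle `[0,b] × [0,a]`. -/
def InRegion (ν : List Step) (p : ℕ × ℕ) : Prop :=
  p.1 ≤ eLen ν ∧ p.2 ≤ nLen ν ∧ lowH ν p.1 ≤ p.2

/-- Two points of the region are ν-incompatible if one is strictly southwest of the other and
the rectangle they span lies in the region (equivalently its bottom-right corner does). -/
def Incompat (ν : List Step) (p q : ℕ × ℕ) : Prop :=
  ((p.1 < q.1 ∧ p.2 < q.2) ∨ (q.1 < p.1 ∧ q.2 < p.2)) ∧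
    InRegion ν (max p.1 q.1, min p.2 q.2)

/-- A ν-binary tree: a maximal set of pairwise ν-compatible points of the region. -/
def IsBinaryTree (ν : List Step) (T : Finset (ℕ × ℕ)) : Prop :=
  (∀ p ∈ T, InRegion ν p) ∧ (∀ p ∈ T, ∀ q ∈ T, ¬ Incompat ν p q) ∧
    ∀ r, InRegion ν r → (∀ p ∈ T, ¬ Incompat ν r p) → r ∈ T

/-- A ν-Schröder tree: pairwise ν-compatible points of the region containing the root
`(0,a)` and meeting every row and every column. -/
def IsSchroderTree (ν : List Step) (T : Finset (ℕ × ℕ)) : Prop :=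
  (∀ p ∈ T, InRegion ν p) ∧ (∀ p ∈ T, ∀ q ∈ T, ¬ Incompat ν p q) ∧
    (0, nLen ν) ∈ T ∧ (∀ y ≤ nLen ν, ∃ p ∈ T, p.2 = y) ∧ (∀ x ≤ eLen ν, ∃ p ∈ T, p.1 = x)

/-- One contraction step: delete a node, provided the result is still a ν-Schröder tree. -/
def ContractStep (ν : List Step) (T T' : Finset (ℕ × ℕ)) : Prop :=
  ∃ q ∈ T, T' = T.erase q ∧ IsSchroderTree ν T'

/-- `p` is a leaf of the (plane tree associated to the) node set `T`: no node strictly below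
it in its column and none strictly to its right in its row. -/
def IsLeafIn (T : Finset (ℕ × ℕ)) (p : ℕ × ℕ) : Prop :=
  (∀ q ∈ T, ¬(q.1 = p.1 ∧ q.2 < p.2)) ∧ (∀ q ∈ T, ¬(q.2 = p.2 ∧ p.1 < q.1))

/-- Starting points of vertical runs and ending points of horizontal runs of `ν`. -/
def leafPts (ν : List Step) : Finset (ℕ × ℕ) :=
  (valleyPts ν 0 0).toFinset ∪ (if ν.head? = some Step.N then {((0 : ℕ), (0 : ℕ))} else ∅) ∪
    (if ν.getLast? = some Step.E then {(eLen ν, nLen ν)} else ∅)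

/-- `horizNu ν x y`: maximal number of east steps that can be placed starting at `(x,y)`
before crossing `ν` (staying within the bounding rectangle). -/
def horizNu (ν : List Step) (x y : ℕ) : ℕ :=
  ((Finset.Icc 1 (eLen ν - x)).filter (fun k => lowH ν (x + k) ≤ y)).card

/-- No `N` step of the given path (started at `(x,y)`) has initial point with
`horizNu`-value `h`. -/
def noNAt (ν : List Step) (h : ℕ) : List Step → ℕ → ℕ → Prop
  | [], _, _ => True
  | Step.N :: p, x, y => horizNu ν x y ≠ h ∧ noNAt ν h p x (y+1)
  | Step.E :: p, x, y => noNAt ν h p (x+1) y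
  | Step.D :: p, x, y => noNAt ν h p (x+1) (y+1)

/-- Right contraction: replace a consecutive `EN` pair (a valley) by a `D` step. -/
def RightC (μ lam : List Step) : Prop :=
  ∃ p q, μ = p ++ Step.E :: Step.N :: q ∧ lam = p ++ Step.D :: q

/-- Left contraction: delete an `E` step together with the most recent preceding `N` step
whose initial point has the same `horizNu` statistic as the initial point of the `E` step,
shift the intermediate subpath, and place a `D` step at the initial point of the `N` step. -/
def LeftC (ν μ lam : List Step) : Prop :=
  ∃ p m q, μ = p ++ Step.N :: (m ++ Step.E :: q) ∧ lam = p ++ Step.D :: (m ++ q) ∧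
    horizNu ν (eLen p) (nLen p)
      = horizNu ν (eLen (p ++ Step.N :: m)) (nLen (p ++ Step.N :: m)) ∧
    noNAt ν (horizNu ν (eLen (p ++ Step.N :: m)) (nLen (p ++ Step.N :: m)))
      m (eLen p) (nLen p + 1)

/-- Diagonal contraction: delete an `E` step ending at the initial point `r` of a `D` step,
together with the most recent preceding `N` step whose initial point `s` satisfies
`horizNu s = horizNu r`, shift the intermediate subpath, and place a `D` step at `s`. -/
def DiagC (ν μ lam : List Step) : Prop :=
  ∃ p m q, μ = p ++ Step.N :: (m ++ Step.E :: Step.D :: q) ∧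
    lam = p ++ Step.D :: (m ++ Step.D :: q) ∧
    horizNu ν (eLen p) (nLen p)
      = horizNu ν (eLen (p ++ Step.N :: m) + 1) (nLen (p ++ Step.N :: m)) ∧
    noNAt ν (horizNu ν (eLen (p ++ Step.N :: m) + 1) (nLen (p ++ Step.N :: m)))
      m (eLen p) (nLen p + 1)

/-- Cover relation of the contraction poset of ν-Schröder paths. -/
def Covers (ν μ lam : List Step) : Prop :=
  IsSmallSchroder ν μ ∧ IsSmallSchroder ν lam ∧
    (RightC μ lam ∨ LeftC ν μ lam ∨ DiagC ν μ lam)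

/-- The Morse matching: `σ` (having a `D` step preceded by no valley) is matched with the
path `π` obtained by replacing the first such `D` step by `EN`. -/
def MorseM (ν : List Step) : Set (List Step × List Step) :=
  { z | ∃ p q, Step.D ∉ p ∧ valleys p = 0 ∧
      z.2 = p ++ Step.D :: q ∧ z.1 = p ++ Step.E :: Step.N :: q ∧ IsSmallSchroder ν z.2 }

/-- Twice the area between a small ν-Schröder path and `ν`. -/
def area2 (ν π : List Step) : ℕ :=
  ∑ x ∈ Finset.range (eLen ν), (colVal π x - colVal ν x)

/-- An `(I,J̄)`-forest: increasing, non-crossing arcs. -/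
def IsIJForest (I J : Finset ℕ) (F : Finset (ℕ × ℕ)) : Prop :=
  (∀ a ∈ F, a.1 ∈ I ∧ a.2 ∈ J ∧ a.1 < a.2) ∧
    (∀ a ∈ F, ∀ a' ∈ F, ¬(a.1 < a'.1 ∧ a'.1 < a.2 ∧ a.2 < a'.2))

/-- A covering `(I,J̄)`-forest: contains the arc `(1,n)` and has no isolated node. -/
def IsCoveringForest (n : ℕ) (I J : Finset ℕ) (F : Finset (ℕ × ℕ)) : Prop :=
  IsIJForest I J F ∧ (1, n) ∈ F ∧
    (∀ i ∈ I, ∃ a ∈ F, a.1 = i) ∧ (∀ j ∈ J, ∃ a ∈ F, a.2 = j)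

/-- The lattice path read off from the interleaving of `I` and `J̄` (elements `2,…,n-1`,
`E` for elements of `I`, `N` for the others). -/
def nuOf (n : ℕ) (I : Finset ℕ) : List Step :=
  (List.range' 2 (n - 2)).map (fun k => if k ∈ I then Step.E else Step.N)

section Helpers
open Step List

@[simp] lemma eLen_append (l r : List Step) : eLen (l ++ r) = eLen l + eLen r := by
  simp [eLen, List.count_append]; omega

@[simp] lemma nLen_append (l r : List Step) : nLen (l ++ r) = nLen l + nLen r := by
  simp [nLen, List.count_append]; omega

@[simp] lemma eLen_repN (k : ℕ) : eLen (List.replicate k Step.N) = 0 := by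
  simp [eLen, List.count_replicate]

@[simp] lemma nLen_repN (k : ℕ) : nLen (List.replicate k Step.N) = k := by
  simp [nLen, List.count_replicate]

@[simp] lemma eLen_nil : eLen ([] : List Step) = 0 := rfl
@[simp] lemma nLen_nil : nLen ([] : List Step) = 0 := rfl

@[simp] lemma eLen_cons (s : Step) (l : List Step) :
    eLen (s :: l) = eLen l + (if s = Step.N then 0 else 1) := by
  cases s <;> simp [eLen, List.count_cons] <;> omega

@[simp] lemma nLen_cons (s : Step) (l : List Step) :
    nLen (s :: l) = nLen l + (if s = Step.E then 0 else 1) := by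
  cases s <;> simp [nLen, List.count_cons] <;> omega

lemma colVal_append (l r : List Step) (x : ℕ) :
    colVal (l ++ r) x = if x < eLen l then colVal l x else 2 * nLen l + colVal r (x - eLen l) := by
  induction l generalizing x with
  | nil => simp
  | cons s l ih =>
    cases s with
    | N =>
      rw [List.cons_append, show colVal (Step.N :: (l ++ r)) x = colVal (l ++ r) x + 2 from rfl,
        show colVal (Step.N :: l) x = colVal l x + 2 from rfl, ih x]
      split <;> split <;> simp_all <;> omega
    | E =>
      cases x with
      | zero => simp [colVal]
      | succ x =>
        rw [List.cons_append, show colVal (Step.E :: (l ++ r)) (x+1) = colVal (l ++ r) x from rfl,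
          show colVal (Step.E :: l) (x+1) = colVal l x from rfl, ih x]
        split <;> split <;> simp_all <;> omega
    | D =>
      cases x with
      | zero => simp [colVal]
      | succ x =>
        rw [List.cons_append, show colVal (Step.D :: (l ++ r)) (x+1) = colVal (l ++ r) x + 2 from rfl,
          show colVal (Step.D :: l) (x+1) = colVal l x + 2 from rfl, ih x]
        split <;> split <;> simp_all <;> omega

@[simp] lemma colVal_repN (k x : ℕ) : colVal (List.replicate k Step.N) x = 2 * k := by
  induction k with
  | zero => simp [colVal]
  | succ k ih => simp only [List.replicate_succ, show ∀ p x, colVal (Step.N :: p) x = colVal p x + 2 from fun _ _ => rfl, ih]; omega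

lemma colVal_of_eLen_le (l : List Step) (x : ℕ) (h : eLen l ≤ x) : colVal l x = 2 * nLen l := by
  have h2 := colVal_append l [] x
  rw [List.append_nil] at h2
  rw [h2]; rw [if_neg (by omega)]; simp [colVal]

lemma lowH_le_nLen (l : List Step) (x : ℕ) : lowH l x ≤ nLen l := by
  induction l generalizing x with
  | nil => cases x <;> simp [lowH]
  | cons s l ih =>
    cases s <;> cases x <;> simp only [lowH] <;> simp <;>
      first
        | omega
        | (exact le_trans (ih _) (by simp))
        | (have := ih (Nat.succ _); omega)


@[simp] lemma lowH_zero (l : List Step) : lowH l 0 = 0 := by simp [lowH]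

lemma lowH_append_le (l r : List Step) (x : ℕ) (h : x ≤ eLen l) : lowH (l ++ r) x = lowH l x := by
  induction l generalizing x with
  | nil =>
    simp at h; subst h; simp
  | cons s l ih =>
    cases x with
    | zero => simp
    | succ x =>
      cases s with
      | N => rw [List.cons_append]; simp only [lowH]; rw [ih]; simp at h; simpa using h
      | E => rw [List.cons_append]; simp only [lowH]; rw [ih]; simp at h; omega
      | D => rw [List.cons_append]; simp only [lowH]; rw [ih]; simp at h; omega

lemma lowH_after_E (β r : List Step) : lowH (β ++ Step.E :: r) (eLen β + 1) = nLen β := by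
  induction β with
  | nil => show lowH (Step.E :: r) 1 = 0; simp only [lowH, lowH_zero]
  | cons s β ih =>
    cases s with
    | N =>
      rw [List.cons_append, show eLen (Step.N :: β) = eLen β from by simp]
      simp only [lowH]; rw [ih]; simp
    | E =>
      rw [List.cons_append, show eLen (Step.E :: β) + 1 = (eLen β + 1) + 1 from by simp]
      simp only [lowH]; rw [ih]; simp
    | D =>
      rw [List.cons_append, show eLen (Step.D :: β) + 1 = (eLen β + 1) + 1 from by simp]
      simp only [lowH]; rw [ih]; simp

end Helpers
section Runs
open Step List

lemma run_exists (π : List Step) (h : eLen π ≠ 0) :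
    ∃ l s j, s ≠ Step.N ∧ π = l ++ s :: List.replicate j Step.N := by
  induction π using List.reverseRecOn with
  | nil => simp at h
  | append_singleton l x ih =>
    cases x with
    | N =>
      have h' : eLen l ≠ 0 := by simpa using h
      obtain ⟨l', s, j, hs, hl⟩ := ih h'
      exact ⟨l', s, j+1, hs, by
        rw [hl, List.replicate_succ' (n := j)]
        simp⟩
    | E => exact ⟨l, Step.E, 0, by simp, by simp⟩
    | D => exact ⟨l, Step.D, 0, by simp, by simp⟩

lemma run_unique_aux : ∀ {j₁ j₂ : ℕ} {s₁ s₂ : Step} {t₁ t₂ : List Step}, s₁ ≠ Step.N → s₂ ≠ Step.N →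
    List.replicate j₁ Step.N ++ s₁ :: t₁ = List.replicate j₂ Step.N ++ s₂ :: t₂ →
    j₁ = j₂ ∧ s₁ = s₂ ∧ t₁ = t₂ := by
  intro j₁
  induction j₁ with
  | zero =>
    intro j₂ s₁ s₂ t₁ t₂ h1 h2 he
    cases j₂ with
    | zero => simpa using he
    | succ j₂ => rw [List.replicate_succ] at he; simp at he; exact absurd he.1 h1
  | succ j₁ ih =>
    intro j₂ s₁ s₂ t₁ t₂ h1 h2 he
    cases j₂ with
    | zero => rw [List.replicate_succ] at he; simp at he; exact absurd he.1.symm h2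
    | succ j₂ =>
      rw [List.replicate_succ, List.replicate_succ] at he
      simp only [List.cons_append, List.cons.injEq] at he
      obtain ⟨h, h', h''⟩ := ih h1 h2 he.2
      exact ⟨by omega, h', h''⟩

lemma run_eq {l₁ l₂ : List Step} {s₁ s₂ : Step} {j₁ j₂ : ℕ} (h1 : s₁ ≠ Step.N) (h2 : s₂ ≠ Step.N)
    (he : l₁ ++ s₁ :: List.replicate j₁ Step.N = l₂ ++ s₂ :: List.replicate j₂ Step.N) :
    l₁ = l₂ ∧ s₁ = s₂ ∧ j₁ = j₂ := by
  have := congrArg List.reverse he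
  simp only [List.reverse_append, List.reverse_cons, List.reverse_replicate] at this
  rw [List.append_assoc, List.append_assoc, List.singleton_append, List.singleton_append] at this
  obtain ⟨hj, hs, ht⟩ := run_unique_aux h1 h2 this
  exact ⟨List.reverse_injective ht, hs, hj⟩

end Runs

section PathSide
open Step List

/-- index for the decomposition -/
def PIdx (g k : ℕ) := {p : ℕ × ℕ // g ≤ p.1 ∧ p.1 + p.2 ≤ g + k ∧ p.2 ≤ 1}

def nuFull (β : List Step) (k : ℕ) : List Step := β ++ Step.E :: List.replicate k Step.N
def nuSub (β : List Step) (i : ℕ) : List Step := β ++ List.replicate i Step.N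

lemma eLen_nuFull (β k) : eLen (nuFull β k) = eLen β + 1 := by simp [nuFull]
lemma nLen_nuFull (β k) : nLen (nuFull β k) = nLen β + k := by simp [nuFull]
lemma eLen_nuSub (β i) : eLen (nuSub β i) = eLen β := by simp [nuSub]
lemma nLen_nuSub (β i) : nLen (nuSub β i) = nLen β + i := by simp [nuSub]

lemma colVal_nuFull_lt (β : List Step) (k x : ℕ) (h : x < eLen β) :
    colVal (nuFull β k) x = colVal β x := by
  rw [nuFull, colVal_append, if_pos h]

lemma colVal_nuFull_eq (β : List Step) (k : ℕ) :
    colVal (nuFull β k) (eLen β) = 2 * nLen β := by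
  rw [nuFull, colVal_append, if_neg (by omega)]
  simp [colVal]

lemma colVal_nuFull_gt (β : List Step) (k x : ℕ) (h : eLen β < x) :
    colVal (nuFull β k) x = 2 * (nLen β + k) := by
  rw [nuFull, colVal_append, if_neg (by omega)]
  obtain ⟨y, hy⟩ : ∃ y, x - eLen β = y + 1 := ⟨x - eLen β - 1, by omega⟩
  rw [hy, show colVal (Step.E :: List.replicate k Step.N) (y+1) = colVal (List.replicate k Step.N) y from rfl,
    colVal_repN]
  ring

lemma colVal_nuSub_lt (β : List Step) (i x : ℕ) (h : x < eLen β) :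
    colVal (nuSub β i) x = colVal β x := by
  rw [nuSub, colVal_append, if_pos h]

lemma colVal_nuSub_ge (β : List Step) (i x : ℕ) (h : eLen β ≤ x) :
    colVal (nuSub β i) x = 2 * (nLen β + i) := by
  rw [nuSub, colVal_append, if_neg (by omega), colVal_repN]; ring

/-- the step list built from index data -/
def pGlue (g k : ℕ) (x : ℕ × ℕ) (π : List Step) : List Step :=
  π ++ (if x.2 = 0 then Step.E else Step.D) :: List.replicate (g + k - (x.1 + x.2)) Step.N

noncomputable def pathEquiv (β : List Step) (k : ℕ) :
    (Σ x : PIdx (nLen β) k, {π : List Step // IsSmallSchroder (nuSub β (x.1.1 - nLen β)) π})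
      ≃ {π : List Step // IsSmallSchroder (nuFull β k) π} := by
  have key : ∀ (x : ℕ × ℕ), (nLen β ≤ x.1 ∧ x.1 + x.2 ≤ nLen β + k ∧ x.2 ≤ 1) → ∀ (π : List Step),
      IsSmallSchroder (nuSub β (x.1 - nLen β)) π → IsSmallSchroder (nuFull β k) (pGlue (nLen β) k x π) := by
    rintro ⟨h, d⟩ hx π ⟨hπ1, hπ2, hπ3⟩
    obtain ⟨hx1, hx2, hx3⟩ := hx
    simp only at hx1 hx2 hx3
    rw [eLen_nuSub] at hπ1
    rw [nLen_nuSub] at hπ2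
    simp only at hπ1 hπ2 hπ3 ⊢
    have hπ2' : nLen π = h := by omega
    refine ⟨?_, ?_, ?_⟩
    · rw [pGlue, eLen_nuFull, eLen_append, hπ1]
      split <;> simp
    · rw [pGlue, nLen_nuFull, nLen_append, hπ2']
      split <;> simp <;> omega
    · intro x
      rw [pGlue, colVal_append, hπ1, hπ2']
      rcases Nat.lt_trichotomy x (eLen β) with hc | hc | hc
      · rw [if_pos hc, colVal_nuFull_lt β k x hc]
        have := hπ3 x
        rwa [colVal_nuSub_lt β _ x hc] at this
      · subst hc
        rw [if_neg (by omega), colVal_nuFull_eq, Nat.sub_self]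
        have : colVal ((if (h, d).2 = 0 then Step.E else Step.D)
            :: List.replicate (nLen β + k - ((h, d).1 + (h, d).2)) Step.N) 0 ≤ 1 := by
          split <;> simp [colVal]
        omega
      · rw [if_neg (by omega), colVal_nuFull_gt β k x hc]
        obtain ⟨y, hy⟩ : ∃ y, x - eLen β = y + 1 := ⟨x - eLen β - 1, by omega⟩
        rw [hy]
        simp only
        have hcv : colVal ((if d = 0 then Step.E else Step.D)
            :: List.replicate (nLen β + k - (h + d)) Step.N) (y+1)
            = 2 * (nLen β + k - (h + d)) + 2 * d := by
          rcases Nat.le_one_iff_eq_zero_or_eq_one.mp hx3 with h0 | h1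
          · subst h0
            rw [if_pos rfl, show colVal (Step.E :: List.replicate (nLen β + k - (h + 0)) Step.N) (y+1)
                = colVal (List.replicate (nLen β + k - (h + 0)) Step.N) y from rfl, colVal_repN] <;> omega
          · subst h1
            rw [if_neg (by simp), show colVal (Step.D :: List.replicate (nLen β + k - (h + 1)) Step.N) (y+1)
                = colVal (List.replicate (nLen β + k - (h + 1)) Step.N) y + 2 from rfl, colVal_repN] <;> omega
        rw [hcv]
        omega
  refine Equiv.ofBijective (fun z => ⟨pGlue (nLen β) k z.1.1 z.2.1, key z.1.1 z.1.2 z.2.1 z.2.2⟩) ⟨?_, ?_⟩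
  · rintro ⟨⟨⟨h₁, d₁⟩, hx₁⟩, ⟨π₁, hπ₁⟩⟩ ⟨⟨⟨h₂, d₂⟩, hx₂⟩, ⟨π₂, hπ₂⟩⟩ heq
    simp only [Subtype.mk.injEq, pGlue] at heq
    obtain ⟨hx11, hx12, hx13⟩ := hx₁
    obtain ⟨hx21, hx22, hx23⟩ := hx₂
    simp only at hx11 hx12 hx13 hx21 hx22 hx23
    obtain ⟨hl, hs, hj⟩ := run_eq (by split <;> simp) (by split <;> simp) heq
    have hd : d₁ = d₂ := by
      rcases Nat.le_one_iff_eq_zero_or_eq_one.mp hx13 with h0 | h0 <;>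
        rcases Nat.le_one_iff_eq_zero_or_eq_one.mp hx23 with h1 | h1 <;>
          subst h0 <;> subst h1 <;> first | rfl | (simp at hs)
    have e1 : nLen π₁ = nLen β + (h₁ - nLen β) := by
      have := hπ₁.2.1; rw [nLen_nuSub] at this; simpa using this
    have e2 : nLen π₂ = nLen β + (h₂ - nLen β) := by
      have := hπ₂.2.1; rw [nLen_nuSub] at this; simpa using this
    have hh : h₁ = h₂ := by rw [hl] at e1; omega
    subst hd; subst hh
    exact congrArg _ (Subtype.ext hl)
  · rintro ⟨π, hπ1, hπ2, hπ3⟩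
    rw [eLen_nuFull] at hπ1
    rw [nLen_nuFull] at hπ2
    obtain ⟨l, s, j, hsN, hls⟩ := run_exists π (by omega)
    have hel : eLen l = eLen β := by
      rw [hls] at hπ1
      rcases s with _ | _ | _
      · exact absurd rfl hsN
      · simp at hπ1; omega
      · simp at hπ1; omega
    obtain ⟨d, hd⟩ : ∃ d : ℕ, (if s = Step.D then 1 else 0) = d := ⟨_, rfl⟩
    obtain ⟨h, hh⟩ : ∃ h, nLen l = h := ⟨_, rfl⟩
    have hnl : nLen π = h + d + j := by
      rw [hls]
      rcases s with _ | _ | _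
      · exact absurd rfl hsN
      · simp at hd; simp; omega
      · simp at hd; simp; omega
    have hcv0 : colVal π (eLen β) = 2 * h + d := by
      rw [hls, colVal_append, if_neg (by omega), hel, Nat.sub_self]
      rcases s with _ | _ | _
      · exact absurd rfl hsN
      · simp at hd; simp [colVal]; omega
      · simp at hd
        rw [show colVal (Step.D :: List.replicate j Step.N) 0 = 1 from rfl]
        omega
    have hdle : d ≤ 1 := by rcases s with _ | _ | _ <;> simp at hd <;> omega
    have hge : nLen β ≤ h := by
      have h2 := hπ3 (eLen β)
      rw [colVal_nuFull_eq] at h2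
      omega
    have hhd : h + d ≤ nLen β + k := by omega
    have hsl : IsSmallSchroder (nuSub β (h - nLen β)) l := by
      refine ⟨by rw [eLen_nuSub]; omega, by rw [nLen_nuSub]; omega, ?_⟩
      intro x
      rcases Nat.lt_or_ge x (eLen β) with hc | hc
      · rw [colVal_nuSub_lt β _ x hc]
        have h1 := hπ3 x
        rw [colVal_nuFull_lt β k x hc] at h1
        rw [hls, colVal_append, if_pos (by omega)] at h1
        exact h1
      · rw [colVal_nuSub_ge β _ x hc, colVal_of_eLen_le l x (by omega)]
        omega
    refine ⟨⟨⟨(h, d), hge, hhd, hdle⟩, ⟨l, hsl⟩⟩, ?_⟩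
    apply Subtype.ext
    simp only [pGlue]
    rw [hls]
    congr 1
    · congr 1
      · rcases s with _ | _ | _
        · exact absurd rfl hsN
        · simp at hd; simp [← hd]
        · simp at hd; simp [← hd]
      · congr 1
        omega

end PathSide
section TreeHelpers
open Step List

lemma inRegion_nuSub_iff (β : List Step) (j : ℕ) (p : ℕ × ℕ) :
    InRegion (nuSub β j) p ↔ p.1 ≤ eLen β ∧ p.2 ≤ nLen β + j ∧ lowH β p.1 ≤ p.2 := by
  unfold InRegion
  rw [eLen_nuSub, nLen_nuSub]
  constructor
  · rintro ⟨h1, h2, h3⟩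
    rw [nuSub, lowH_append_le _ _ _ h1] at h3
    exact ⟨h1, h2, h3⟩
  · rintro ⟨h1, h2, h3⟩
    rw [nuSub, lowH_append_le _ _ _ h1]
    exact ⟨h1, h2, h3⟩

lemma lowH_nuFull (β : List Step) (k x : ℕ) (hx : x ≤ eLen β) :
    lowH (nuFull β k) x = lowH β x := lowH_append_le _ _ _ hx

lemma lowH_nuFull_top (β : List Step) (k : ℕ) :
    lowH (nuFull β k) (eLen β + 1) = nLen β := lowH_after_E β _

lemma inRegion_nuFull_iff (β : List Step) (k : ℕ) (p : ℕ × ℕ) :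
    InRegion (nuFull β k) p ↔
      (p.1 ≤ eLen β ∧ p.2 ≤ nLen β + k ∧ lowH β p.1 ≤ p.2) ∨
      (p.1 = eLen β + 1 ∧ p.2 ≤ nLen β + k ∧ nLen β ≤ p.2) := by
  unfold InRegion
  rw [eLen_nuFull, nLen_nuFull]
  constructor
  · rintro ⟨h1, h2, h3⟩
    rcases Nat.lt_or_ge p.1 (eLen β + 1) with hc | hc
    · left
      rw [lowH_nuFull β k p.1 (by omega)] at h3
      exact ⟨by omega, h2, h3⟩
    · right
      have : p.1 = eLen β + 1 := by omega
      rw [this, lowH_nuFull_top] at h3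
      exact ⟨this, h2, h3⟩
  · rintro (⟨h1, h2, h3⟩ | ⟨h1, h2, h3⟩)
    · exact ⟨by omega, h2, by rw [lowH_nuFull β k p.1 h1]; exact h3⟩
    · exact ⟨by omega, h2, by rw [h1, lowH_nuFull_top]; exact h3⟩

/-- vertical stretching map -/
def phiF (g c : ℕ) (p : ℕ × ℕ) : ℕ × ℕ := (p.1, if p.2 < g then p.2 else p.2 + c)

/-- vertical squashing map -/
def sigF (g c : ℕ) (p : ℕ × ℕ) : ℕ × ℕ := (p.1, if p.2 < g then p.2 else p.2 - c)

lemma sigF_phiF (g c : ℕ) (p : ℕ × ℕ) : sigF g c (phiF g c p) = p := by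
  rcases p with ⟨px, py⟩
  simp only [phiF, sigF]
  by_cases hpy : py < g
  · rw [if_pos hpy, if_pos hpy]
  · rw [if_neg hpy, if_neg (show ¬ py + c < g by omega)]
    simp

lemma phiF_inj (g c : ℕ) : Function.Injective (phiF g c) :=
  Function.LeftInverse.injective (sigF_phiF g c)

lemma phiF_lt_iff (g c y y' : ℕ) :
    (if y < g then y else y + c) < (if y' < g then y' else y' + c) ↔ y < y' := by
  split <;> split <;> omega

lemma phiF_min (g c y y' : ℕ) :
    min (if y < g then y else y + c) (if y' < g then y' else y' + c)
      = (if min y y' < g then min y y' else min y y' + c) := by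
  rcases le_total y y' with h | h
  · rw [min_eq_left (show (if y < g then y else y + c) ≤ (if y' < g then y' else y' + c) by
      split <;> split <;> omega), min_eq_left h]
  · rw [min_eq_right (show (if y' < g then y' else y' + c) ≤ (if y < g then y else y + c) by
      split <;> split <;> omega), min_eq_right h]

lemma incompat_phiF (β : List Step) (k j c : ℕ) (q r : ℕ × ℕ)
    (hq1 : q.1 ≤ eLen β) (hq2 : q.2 ≤ nLen β + j) (hr1 : r.1 ≤ eLen β) (hr2 : r.2 ≤ nLen β + j)
    (hjc : j + c ≤ k) :
    Incompat (nuFull β k) (phiF (nLen β) c q) (phiF (nLen β) c r) ↔ Incompat (nuSub β j) q r := by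
  unfold Incompat
  simp only [phiF]
  rw [phiF_lt_iff, phiF_lt_iff, phiF_min, inRegion_nuFull_iff, inRegion_nuSub_iff]
  dsimp only
  constructor
  · rintro ⟨horder, hreg⟩
    refine ⟨horder, ?_⟩
    rcases hreg with ⟨h1, h2, h3⟩ | ⟨h1, h2, h3⟩
    · refine ⟨h1, by omega, ?_⟩
      have hb := lowH_le_nLen β (q.1 ⊔ r.1)
      split at h3 <;> omega
    · omega
  · rintro ⟨horder, h1, h2, h3⟩
    refine ⟨horder, Or.inl ⟨h1, ?_, ?_⟩⟩
    · split <;> omega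
    · have hb := lowH_le_nLen β (q.1 ⊔ r.1)
      split <;> omega

end TreeHelpers
section TreeSide
open Step List

lemma incompat_symm {ν : List Step} {p q : ℕ × ℕ} (h : Incompat ν p q) : Incompat ν q p := by
  unfold Incompat at *
  obtain ⟨h1, h2⟩ := h
  refine ⟨by tauto, ?_⟩
  rwa [max_comm q.1 p.1, min_comm q.2 p.2]

def tGlue (β : List Step) (k : ℕ) (x : ℕ × ℕ) (T : Finset (ℕ × ℕ)) : Finset (ℕ × ℕ) :=
  T.image (phiF (nLen β) (nLen β + k - x.1)) ∪
    (Finset.Icc (nLen β) (nLen β + k - (x.1 - nLen β) - x.2)).image (fun y => (eLen β + 1, y))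

lemma mem_tGlue (β : List Step) (k : ℕ) (x : ℕ × ℕ) (T : Finset (ℕ × ℕ)) (p : ℕ × ℕ) :
    p ∈ tGlue β k x T ↔ (∃ q ∈ T, phiF (nLen β) (nLen β + k - x.1) q = p) ∨
      (∃ y, (nLen β ≤ y ∧ y ≤ nLen β + k - (x.1 - nLen β) - x.2) ∧ p = (eLen β + 1, y)) := by
  simp only [tGlue, Finset.mem_union, Finset.mem_image, Finset.mem_Icc]
  constructor
  · rintro (⟨q, hq, rfl⟩ | ⟨y, hy, rfl⟩)
    · exact Or.inl ⟨q, hq, rfl⟩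
    · exact Or.inr ⟨y, hy, rfl⟩
  · rintro (⟨q, hq, rfl⟩ | ⟨y, hy, rfl⟩)
    · exact Or.inl ⟨q, hq, rfl⟩
    · exact Or.inr ⟨y, hy, rfl⟩

lemma tGlue_tree (β : List Step) (k : ℕ) (h d : ℕ)
    (hx1 : nLen β ≤ h) (hx2 : h + d ≤ nLen β + k) (hx3 : d ≤ 1)
    (T : Finset (ℕ × ℕ)) (hT : IsSchroderTree (nuSub β (h - nLen β)) T) :
    IsSchroderTree (nuFull β k) (tGlue β k (h, d) T) := by
  obtain ⟨hT1, hT2, hT3, hT4, hT5⟩ := hT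
  have hreg : ∀ q ∈ T, q.1 ≤ eLen β ∧ q.2 ≤ nLen β + (h - nLen β) ∧ lowH β q.1 ≤ q.2 := by
    intro q hq
    exact (inRegion_nuSub_iff β _ q).mp (hT1 q hq)
  rw [nLen_nuSub] at hT4
  rw [eLen_nuSub] at hT5
  refine ⟨?_, ?_, ?_, ?_, ?_⟩
  · -- region
    intro p hp
    rw [mem_tGlue] at hp
    rcases hp with ⟨q, hq, rfl⟩ | ⟨y, ⟨hy1, hy2⟩, rfl⟩
    · obtain ⟨h1, h2, h3⟩ := hreg q hq
      rw [inRegion_nuFull_iff]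
      left
      refine ⟨h1, ?_, ?_⟩ <;> (unfold phiF; dsimp; split <;> omega)
    · rw [inRegion_nuFull_iff]
      right
      exact ⟨rfl, by omega, by dsimp; omega⟩
  · -- compatibility
    have colcase : ∀ q ∈ T, ∀ y, nLen β ≤ y → y ≤ nLen β + k - (h - nLen β) - d →
        ¬ Incompat (nuFull β k) (phiF (nLen β) (nLen β + k - h) q) (eLen β + 1, y) := by
      intro q hq y hy1 hy2 hInc
      obtain ⟨hq1, hq2, hq3⟩ := hreg q hq
      obtain ⟨horder, hcorner⟩ := hInc
      rw [inRegion_nuFull_iff] at hcorner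
      unfold phiF at horder hcorner
      dsimp at horder hcorner
      rcases hcorner with ⟨hc1, _, _⟩ | ⟨_, _, hc3⟩
      · omega
      · split at hc3 <;> split at horder <;> omega
    intro p hp q hq
    rw [mem_tGlue] at hp hq
    rcases hp with ⟨p', hp', rfl⟩ | ⟨y, ⟨hy1, hy2⟩, rfl⟩ <;>
      rcases hq with ⟨q', hq', rfl⟩ | ⟨z, ⟨hz1, hz2⟩, rfl⟩
    · intro hInc
      rw [incompat_phiF β k (h - nLen β) (nLen β + k - h) p' q'
        (hreg p' hp').1 (hreg p' hp').2.1 (hreg q' hq').1 (hreg q' hq').2.1 (by omega)] at hInc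
      exact hT2 p' hp' q' hq' hInc
    · exact colcase p' hp' z hz1 hz2
    · intro hInc
      exact colcase q' hq' y hy1 hy2 (incompat_symm hInc)
    · rintro ⟨horder, _⟩
      dsimp at horder
      omega
  · -- root
    rw [nLen_nuFull, mem_tGlue]
    left
    rw [nLen_nuSub] at hT3
    refine ⟨(0, nLen β + (h - nLen β)), hT3, ?_⟩
    unfold phiF
    rw [Prod.ext_iff]
    refine ⟨rfl, ?_⟩
    dsimp
    rw [if_neg (by omega)]
    omega
  · -- rows
    rw [nLen_nuFull]
    intro y hy
    rcases Nat.lt_or_ge y (nLen β) with hc | hc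
    · obtain ⟨p, hp, hpy⟩ := hT4 y (by omega)
      refine ⟨phiF (nLen β) (nLen β + k - h) p, ?_, ?_⟩
      · rw [mem_tGlue]; exact Or.inl ⟨p, hp, rfl⟩
      · unfold phiF; dsimp; rw [hpy, if_pos hc]
    · rcases Nat.lt_or_ge (nLen β + k - (h - nLen β) - d) y with hc2 | hc2
      · -- high row: image of row y - c
        obtain ⟨p, hp, hpy⟩ := hT4 (y - (nLen β + k - h)) (by omega)
        refine ⟨phiF (nLen β) (nLen β + k - h) p, ?_, ?_⟩
        · rw [mem_tGlue]; exact Or.inl ⟨p, hp, rfl⟩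
        · unfold phiF; dsimp; rw [hpy, if_neg (by omega)]; omega
      · -- column row
        refine ⟨(eLen β + 1, y), ?_, rfl⟩
        rw [mem_tGlue]
        exact Or.inr ⟨y, ⟨hc, hc2⟩, rfl⟩
  · -- cols
    rw [eLen_nuFull]
    intro x hx
    rcases Nat.lt_or_ge x (eLen β + 1) with hc | hc
    · obtain ⟨p, hp, hpx⟩ := hT5 x (by omega)
      refine ⟨phiF (nLen β) (nLen β + k - h) p, ?_, ?_⟩
      · rw [mem_tGlue]; exact Or.inl ⟨p, hp, rfl⟩
      · unfold phiF; dsimp; exact hpx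
    · refine ⟨(eLen β + 1, nLen β), ?_, by dsimp; omega⟩
      rw [mem_tGlue]
      exact Or.inr ⟨nLen β, ⟨le_refl _, by omega⟩, rfl⟩

end TreeSide
section TreeEquiv
open Step List

noncomputable def treeEquiv (β : List Step) (k : ℕ) :
    (Σ x : PIdx (nLen β) k, {T : Finset (ℕ × ℕ) // IsSchroderTree (nuSub β (x.1.1 - nLen β)) T})
      ≃ {T : Finset (ℕ × ℕ) // IsSchroderTree (nuFull β k) T} := by
  classical
  refine Equiv.ofBijective (fun z => ⟨tGlue β k z.1.1 z.2.1, by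
    rcases z with ⟨⟨⟨h, d⟩, hx⟩, ⟨T, hT⟩⟩
    exact tGlue_tree β k h d hx.1 hx.2.1 hx.2.2 T hT⟩) ⟨?_, ?_⟩
  · -- injective
    rintro ⟨⟨⟨h₁, d₁⟩, hx₁⟩, ⟨T₁, hT₁⟩⟩ ⟨⟨⟨h₂, d₂⟩, hx₂⟩, ⟨T₂, hT₂⟩⟩ heq
    simp only [Subtype.mk.injEq] at heq
    obtain ⟨hx11, hx12, hx13⟩ := hx₁
    obtain ⟨hx21, hx22, hx23⟩ := hx₂
    simp only at hx11 hx12 hx13 hx21 hx22 hx23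
    have hreg1 : ∀ q ∈ T₁, q.1 ≤ eLen β ∧ q.2 ≤ nLen β + (h₁ - nLen β) ∧ lowH β q.1 ≤ q.2 :=
      fun q hq => (inRegion_nuSub_iff β _ q).mp (hT₁.1 q hq)
    have hreg2 : ∀ q ∈ T₂, q.1 ≤ eLen β ∧ q.2 ≤ nLen β + (h₂ - nLen β) ∧ lowH β q.1 ≤ q.2 :=
      fun q hq => (inRegion_nuSub_iff β _ q).mp (hT₂.1 q hq)
    -- column membership characterization
    have colchar : ∀ (h d : ℕ) (T : Finset (ℕ × ℕ)),
        (∀ q ∈ T, q.1 ≤ eLen β) → ∀ y, (eLen β + 1, y) ∈ tGlue β k (h, d) T ↔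
          (nLen β ≤ y ∧ y ≤ nLen β + k - (h - nLen β) - d) := by
      intro h d T hb y
      rw [mem_tGlue]
      constructor
      · rintro (⟨q, hq, hfq⟩ | ⟨z, hz, hyz⟩)
        · have := hb q hq
          have : (phiF (nLen β) (nLen β + k - h) q).1 = q.1 := rfl
          rw [hfq] at this
          dsimp at this
          omega
        · have hyz2 : y = z := (Prod.ext_iff.mp hyz).2
          subst hyz2
          exact hz
      · intro hy
        exact Or.inr ⟨y, hy, rfl⟩
    have hbd1 : ∀ q ∈ T₁, q.1 ≤ eLen β := fun q hq => (hreg1 q hq).1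
    have hbd2 : ∀ q ∈ T₂, q.1 ≤ eLen β := fun q hq => (hreg2 q hq).1
    have hM : nLen β + k - (h₁ - nLen β) - d₁ = nLen β + k - (h₂ - nLen β) - d₂ := by
      have m1 : (eLen β + 1, nLen β + k - (h₁ - nLen β) - d₁) ∈ tGlue β k (h₁, d₁) T₁ :=
        (colchar h₁ d₁ T₁ hbd1 _).mpr ⟨by omega, le_refl _⟩
      have m2 : (eLen β + 1, nLen β + k - (h₂ - nLen β) - d₂) ∈ tGlue β k (h₂, d₂) T₂ :=
        (colchar h₂ d₂ T₂ hbd2 _).mpr ⟨by omega, le_refl _⟩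
      rw [heq] at m1
      rw [← heq] at m2
      have b1 := ((colchar h₂ d₂ T₂ hbd2 _).mp m1).2
      have b2 := ((colchar h₁ d₁ T₁ hbd1 _).mp m2).2
      omega
    -- characterize d by presence of a low point in row M
    have dchar : ∀ (h d : ℕ) (T : Finset (ℕ × ℕ)),
        nLen β ≤ h → h + d ≤ nLen β + k → d ≤ 1 →
        IsSchroderTree (nuSub β (h - nLen β)) T →
        ((∃ p ∈ tGlue β k (h, d) T, p.1 ≤ eLen β ∧ p.2 = nLen β + k - (h - nLen β) - d) ↔ d = 0) := by
      intro h d T hh1 hh2 hd1 hT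
      constructor
      · rintro ⟨p, hp, hp1, hp2⟩
        rw [mem_tGlue] at hp
        rcases hp with ⟨q, hq, rfl⟩ | ⟨y, hy, rfl⟩
        · have hr := (inRegion_nuSub_iff β _ q).mp (hT.1 q hq)
          unfold phiF at hp1 hp2
          dsimp at hp1 hp2
          split at hp2 <;> omega
        · dsimp at hp1
          omega
      · intro hd0
        subst hd0
        obtain ⟨p, hp, hpy⟩ := hT.2.2.2.1 (nLen β) (by rw [nLen_nuSub]; omega)
        have hr := (inRegion_nuSub_iff β _ p).mp (hT.1 p hp)
        refine ⟨phiF (nLen β) (nLen β + k - h) p, ?_, ?_, ?_⟩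
        · rw [mem_tGlue]; exact Or.inl ⟨p, hp, rfl⟩
        · exact hr.1
        · unfold phiF; dsimp; rw [hpy, if_neg (by omega)]; omega
    have hd : d₁ = d₂ := by
      have i1 := dchar h₁ d₁ T₁ hx11 hx12 hx13 hT₁
      have i2 := dchar h₂ d₂ T₂ hx21 hx22 hx23 hT₂
      rw [heq, hM] at i1
      have := i1.symm.trans i2
      omega
    have hh : h₁ = h₂ := by omega
    subst hd; subst hh
    have hTT : T₁ = T₂ := by
      apply Finset.image_injective (phiF_inj (nLen β) (nLen β + k - h₁))
      have himg : ∀ (T : Finset (ℕ × ℕ)), (∀ q ∈ T, q.1 ≤ eLen β) →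
          T.image (phiF (nLen β) (nLen β + k - h₁))
            = (tGlue β k (h₁, d₁) T).filter (fun p => p.1 ≤ eLen β) := by
        intro T hb
        ext p
        simp only [Finset.mem_filter, Finset.mem_image, mem_tGlue]
        constructor
        · rintro ⟨q, hq, rfl⟩
          exact ⟨Or.inl ⟨q, hq, rfl⟩, hb q hq⟩
        · rintro ⟨(⟨q, hq, rfl⟩ | ⟨y, hy, rfl⟩), hple⟩
          · exact ⟨q, hq, rfl⟩
          · dsimp at hple; omega
      rw [himg T₁ hbd1, himg T₂ hbd2, heq]
    subst hTT
    rfl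
  · -- surjective
    rintro ⟨U, hU⟩
    obtain ⟨hU1, hU2, hU3, hU4, hU5⟩ := hU
    rw [nLen_nuFull] at hU3 hU4
    rw [eLen_nuFull] at hU5
    -- the top point of the last column
    obtain ⟨p0, hp0, hp0x⟩ := hU5 (eLen β + 1) le_rfl
    have hSne : ((U.filter (fun p => p.1 = eLen β + 1)).image Prod.snd).Nonempty :=
      ⟨p0.2, Finset.mem_image.mpr ⟨p0, Finset.mem_filter.mpr ⟨hp0, hp0x⟩, rfl⟩⟩
    obtain ⟨M, hM⟩ : ∃ M, ((U.filter (fun p => p.1 = eLen β + 1)).image Prod.snd).max' hSne = M := ⟨_, rfl⟩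
    have hF1 : (eLen β + 1, M) ∈ U := by
      have := Finset.max'_mem _ hSne
      rw [hM] at this
      obtain ⟨p, hp, hpm⟩ := Finset.mem_image.mp this
      obtain ⟨hpU, hpx⟩ := Finset.mem_filter.mp hp
      have : p = (eLen β + 1, M) := by rw [Prod.ext_iff]; exact ⟨hpx, hpm⟩
      rwa [this] at hpU
    have hF2 : ∀ p ∈ U, p.1 = eLen β + 1 → p.2 ≤ M := by
      intro p hp hpx
      rw [← hM]
      exact Finset.le_max' _ _ (Finset.mem_image.mpr ⟨p, Finset.mem_filter.mpr ⟨hp, hpx⟩, rfl⟩)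
    have hF3 : nLen β ≤ M ∧ M ≤ nLen β + k := by
      have := (inRegion_nuFull_iff β k _).mp (hU1 _ hF1)
      rcases this with ⟨hc, _, _⟩ | ⟨_, h2, h3⟩
      · dsimp at hc; omega
      · exact ⟨h3, h2⟩
    have hF4 : ∀ p ∈ U, p.1 ≤ eLen β → p.2 < nLen β ∨ M ≤ p.2 := by
      intro p hp hpx
      by_contra hcon
      push_neg at hcon
      apply hU2 p hp (eLen β + 1, M) hF1
      refine ⟨Or.inl ⟨by dsimp; omega, by dsimp; omega⟩, ?_⟩
      rw [inRegion_nuFull_iff]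
      right
      have hpr := (inRegion_nuFull_iff β k p).mp (hU1 p hp)
      refine ⟨by dsimp; omega, by dsimp; rcases hpr with ⟨_, h2, _⟩ | ⟨_, h2, _⟩ <;> omega,
        by dsimp; omega⟩
    have hF5 : ∀ y, nLen β ≤ y → y ≤ M → (eLen β + 1, y) ∈ U := by
      intro y hy1 hy2
      rcases Nat.eq_or_lt_of_le hy2 with rfl | hlt
      · exact hF1
      · obtain ⟨p, hp, hpy⟩ := hU4 y (by omega)
        have hpr := (inRegion_nuFull_iff β k p).mp (hU1 p hp)
        have hp1 : p.1 = eLen β + 1 := by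
          rcases hpr with ⟨h1, _, _⟩ | ⟨h1, _, _⟩
          · have := hF4 p hp h1; omega
          · exact h1
        have : p = (eLen β + 1, y) := by rw [Prod.ext_iff]; exact ⟨hp1, hpy⟩
        rwa [← this]
      

    obtain ⟨d, hd0, hd1⟩ : ∃ d : ℕ, ((∃ p ∈ U, p.1 ≤ eLen β ∧ p.2 = M) ↔ d = 0) ∧ d ≤ 1 := by
      rcases Classical.em (∃ p ∈ U, p.1 ≤ eLen β ∧ p.2 = M) with hP | hP
      · exact ⟨0, by simpa using hP, by omega⟩
      · exact ⟨1, ⟨fun h => absurd h hP, by omega⟩, le_refl _⟩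
    have hMd : M + d ≤ nLen β + k := by
      rcases Nat.eq_or_lt_of_le hF3.2 with hMe | hlt
      · have : d = 0 := hd0.mp ⟨(0, nLen β + k), hU3, by dsimp; omega, by dsimp; omega⟩
        omega
      · omega
    obtain ⟨h, hhdef⟩ : ∃ h, nLen β + (nLen β + k - M - d) = h := ⟨_, rfl⟩
    have hh1 : nLen β ≤ h := by omega
    have hh2 : h + d ≤ nLen β + k := by omega
    -- c = nLen β + k - h = M + d - nLen β
    have hceq : nLen β + k - h = M + d - nLen β := by omega
    have hF7 : ∀ p ∈ U, p.1 ≤ eLen β → p.2 < nLen β ∨ nLen β + (nLen β + k - h) ≤ p.2 := by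
      intro p hp hpx
      rcases hF4 p hp hpx with hc | hc
      · exact Or.inl hc
      · rcases Nat.eq_or_lt_of_le hc with hc2 | hc2
        · have : d = 0 := hd0.mp ⟨p, hp, hpx, hc2.symm⟩
          right; omega
        · right; omega
    have hK1 : ∀ p ∈ U, p.1 ≤ eLen β →
        phiF (nLen β) (nLen β + k - h) (sigF (nLen β) (nLen β + k - h) p) = p := by
      intro p hp hpx
      rcases hF7 p hp hpx with hc | hc
      · unfold phiF sigF
        rw [Prod.ext_iff]
        refine ⟨rfl, ?_⟩
        dsimp
        rw [if_pos hc, if_pos hc]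
      · unfold phiF sigF
        rw [Prod.ext_iff]
        refine ⟨rfl, ?_⟩
        dsimp
        rw [if_neg (show ¬ p.2 < nLen β by omega),
          if_neg (show ¬ p.2 - (nLen β + k - h) < nLen β by omega)]
        omega
    obtain ⟨T', hT'def⟩ : ∃ T', (U.filter (fun p => p.1 ≤ eLen β)).image (sigF (nLen β) (nLen β + k - h)) = T' :=
      ⟨_, rfl⟩
    have hmemT' : ∀ q, q ∈ T' ↔ ∃ p ∈ U, (p.1 ≤ eLen β) ∧ sigF (nLen β) (nLen β + k - h) p = q := by
      intro q
      rw [← hT'def]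
      simp only [Finset.mem_image, Finset.mem_filter]
      constructor
      · rintro ⟨p, ⟨hp, hpx⟩, rfl⟩; exact ⟨p, hp, hpx, rfl⟩
      · rintro ⟨p, hp, hpx, rfl⟩; exact ⟨p, ⟨hp, hpx⟩, rfl⟩
    have hregT' : ∀ q ∈ T', InRegion (nuSub β (h - nLen β)) q := by
      intro q hq
      obtain ⟨p, hp, hpx, rfl⟩ := (hmemT' q).mp hq
      have hpr := (inRegion_nuFull_iff β k p).mp (hU1 p hp)
      have hlow : lowH β p.1 ≤ p.2 ∧ p.2 ≤ nLen β + k := by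
        rcases hpr with ⟨_, h2, h3⟩ | ⟨h1, _, _⟩
        · exact ⟨h3, h2⟩
        · omega
      have hlb := lowH_le_nLen β p.1
      rw [inRegion_nuSub_iff]
      unfold sigF
      dsimp
      rcases hF7 p hp hpx with hc | hc
      · rw [if_pos (by omega)]
        exact ⟨hpx, by omega, by omega⟩
      · rw [if_neg (by omega)]
        exact ⟨hpx, by omega, by omega⟩
    have hcompatT' : ∀ p ∈ T', ∀ q ∈ T', ¬ Incompat (nuSub β (h - nLen β)) p q := by
      intro q1 hq1 q2 hq2 hInc
      have b1 := (inRegion_nuSub_iff β _ _).mp (hregT' _ hq1)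
      have b2 := (inRegion_nuSub_iff β _ _).mp (hregT' _ hq2)
      obtain ⟨p1, hp1, hpx1, hs1⟩ := (hmemT' q1).mp hq1
      obtain ⟨p2, hp2, hpx2, hs2⟩ := (hmemT' q2).mp hq2
      apply hU2 p1 hp1 p2 hp2
      rw [← hK1 p1 hp1 hpx1, ← hK1 p2 hp2 hpx2, hs1, hs2]
      rw [incompat_phiF β k (h - nLen β) (nLen β + k - h) _ _ b1.1 b1.2.1 b2.1 b2.2.1 (by omega)]
      exact hInc
    have hrootT' : (0, nLen (nuSub β (h - nLen β))) ∈ T' := by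
      rw [nLen_nuSub]
      apply (hmemT' _).mpr
      refine ⟨(0, nLen β + k), hU3, by dsimp; omega, ?_⟩
      unfold sigF
      rw [Prod.ext_iff]
      refine ⟨rfl, ?_⟩
      dsimp
      rw [if_neg (by omega)]
      omega
    have hrowsT' : ∀ y ≤ nLen (nuSub β (h - nLen β)), ∃ p ∈ T', p.2 = y := by
      intro y hy
      rw [nLen_nuSub] at hy
      rcases Nat.lt_or_ge y (nLen β) with hc | hc
      · obtain ⟨p, hp, hpy⟩ := hU4 y (by omega)
        have hpx : p.1 ≤ eLen β := by
          rcases (inRegion_nuFull_iff β k p).mp (hU1 p hp) with ⟨h1, _, _⟩ | ⟨_, _, h3⟩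
          · exact h1
          · omega
        refine ⟨sigF (nLen β) (nLen β + k - h) p, (hmemT' _).mpr ⟨p, hp, hpx, rfl⟩, ?_⟩
        unfold sigF; dsimp; rw [hpy, if_pos hc]
      · obtain ⟨p, hp, hpy⟩ := hU4 (y + (nLen β + k - h)) (by omega)
        have hple : p.1 ≤ eLen β + 1 := by
          rcases (inRegion_nuFull_iff β k p).mp (hU1 p hp) with ⟨h1, _, _⟩ | ⟨h1, _, _⟩ <;> omega
        rcases Nat.lt_or_ge p.1 (eLen β + 1) with hpc | hpc
        · refine ⟨sigF (nLen β) (nLen β + k - h) p, (hmemT' _).mpr ⟨p, hp, by omega, rfl⟩, ?_⟩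
          unfold sigF; dsimp
          rw [hpy, if_neg (by omega)]
          omega
        · -- p is in the last column, so y + c ≤ M, forcing d = 0 and y = nLen β
          have hp1 : p.1 = eLen β + 1 := by omega
          have hyM := hF2 p hp hp1
          rw [hpy] at hyM
          have hd00 : d = 0 := by omega
          have hyg : y = nLen β := by omega
          obtain ⟨p', hp', hpx', hpM⟩ := hd0.mpr hd00
          refine ⟨sigF (nLen β) (nLen β + k - h) p', (hmemT' _).mpr ⟨p', hp', hpx', rfl⟩, ?_⟩
          unfold sigF; dsimp
          rw [hpM, if_neg (by omega)]
          omega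
    have hcolsT' : ∀ x ≤ eLen (nuSub β (h - nLen β)), ∃ p ∈ T', p.1 = x := by
      intro x hx
      rw [eLen_nuSub] at hx
      obtain ⟨p, hp, hpx⟩ := hU5 x (by omega)
      refine ⟨sigF (nLen β) (nLen β + k - h) p, (hmemT' _).mpr ⟨p, hp, by omega, rfl⟩, ?_⟩
      unfold sigF; dsimp
      exact hpx
    have hglue : tGlue β k (h, d) T' = U := by
      apply Finset.ext
      intro p
      rw [mem_tGlue]
      dsimp only
      constructor
      · rintro (⟨q, hq, rfl⟩ | ⟨y, ⟨hy1, hy2⟩, rfl⟩)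
        · obtain ⟨p', hp', hpx', rfl⟩ := (hmemT' q).mp hq
          rw [hK1 p' hp' hpx']
          exact hp'
        · exact hF5 y hy1 (by omega)
      · intro hp
        rcases Nat.lt_or_ge p.1 (eLen β + 1) with hpc | hpc
        · refine Or.inl ⟨sigF (nLen β) (nLen β + k - h) p, (hmemT' _).mpr ⟨p, hp, by omega, rfl⟩,
            hK1 p hp (by omega)⟩
        · have hp1 : p.1 = eLen β + 1 := by
            rcases (inRegion_nuFull_iff β k p).mp (hU1 p hp) with ⟨h1, _, _⟩ | ⟨h1, _, _⟩ <;> omega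
          have hpg : nLen β ≤ p.2 := by
            rcases (inRegion_nuFull_iff β k p).mp (hU1 p hp) with ⟨h1, _, _⟩ | ⟨_, _, h3⟩
            · omega
            · exact h3
          refine Or.inr ⟨p.2, ⟨hpg, ?_⟩, ?_⟩
          · have := hF2 p hp hp1
            omega
          · rw [Prod.ext_iff]
            exact ⟨hp1, rfl⟩
    exact ⟨⟨⟨(h, d), hh1, hh2, hd1⟩, ⟨T', ⟨hregT', hcompatT', hrootT', hrowsT', hcolsT'⟩⟩⟩,
      Subtype.ext hglue⟩
end TreeEquiv
section Assembly
open Step List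

lemma eLen_zero_eq (π : List Step) (h : eLen π = 0) : π = List.replicate (nLen π) Step.N := by
  induction π with
  | nil => simp
  | cons s l ih =>
    cases s with
    | N =>
      have h' : eLen l = 0 := by simp at h; omega
      have : nLen (Step.N :: l) = nLen l + 1 := by simp
      rw [this, List.replicate_succ]
      rw [← ih h']
    | E => simp at h
    | D => simp at h

lemma base_path_is (n : ℕ) : IsSmallSchroder (List.replicate n Step.N) (List.replicate n Step.N) :=
  ⟨rfl, rfl, fun _ => le_refl _⟩

lemma base_path_unique (n : ℕ) (π : List Step) (hπ : IsSmallSchroder (List.replicate n Step.N) π) :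
    π = List.replicate n Step.N := by
  obtain ⟨h1, h2, _⟩ := hπ
  rw [eLen_repN] at h1
  rw [nLen_repN] at h2
  rw [eLen_zero_eq π h1, h2]

def baseTree (n : ℕ) : Finset (ℕ × ℕ) := (Finset.range (n+1)).image (fun y => (0, y))

lemma mem_baseTree (n : ℕ) (p : ℕ × ℕ) : p ∈ baseTree n ↔ p.1 = 0 ∧ p.2 ≤ n := by
  simp only [baseTree, Finset.mem_image, Finset.mem_range]
  constructor
  · rintro ⟨y, hy, rfl⟩; exact ⟨rfl, by omega⟩
  · rintro ⟨h1, h2⟩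
    exact ⟨p.2, by omega, by rw [Prod.ext_iff]; exact ⟨h1.symm, rfl⟩⟩

lemma base_region (n : ℕ) (p : ℕ × ℕ) : InRegion (List.replicate n Step.N) p ↔ p.1 = 0 ∧ p.2 ≤ n := by
  unfold InRegion
  rw [eLen_repN, nLen_repN]
  constructor
  · rintro ⟨h1, h2, _⟩; exact ⟨by omega, h2⟩
  · rintro ⟨h1, h2⟩
    exact ⟨by omega, h2, by rw [h1, lowH_zero]; omega⟩

lemma base_tree_is (n : ℕ) : IsSchroderTree (List.replicate n Step.N) (baseTree n) := by
  refine ⟨?_, ?_, ?_, ?_, ?_⟩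
  · intro p hp
    rw [base_region]
    exact (mem_baseTree n p).mp hp
  · intro p hp q hq hInc
    obtain ⟨horder, _⟩ := hInc
    have h1 := (mem_baseTree n p).mp hp
    have h2 := (mem_baseTree n q).mp hq
    omega
  · rw [mem_baseTree, nLen_repN]; exact ⟨rfl, le_refl _⟩
  · intro y hy
    rw [nLen_repN] at hy
    exact ⟨(0, y), (mem_baseTree n _).mpr ⟨rfl, hy⟩, rfl⟩
  · intro x hx
    rw [eLen_repN] at hx
    exact ⟨(0, 0), (mem_baseTree n _).mpr ⟨rfl, by omega⟩, by omega⟩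

lemma base_tree_unique (n : ℕ) (T : Finset (ℕ × ℕ)) (hT : IsSchroderTree (List.replicate n Step.N) T) :
    T = baseTree n := by
  obtain ⟨hT1, _, _, hT4, _⟩ := hT
  rw [nLen_repN] at hT4
  apply Finset.ext
  intro p
  rw [mem_baseTree]
  constructor
  · intro hp
    exact (base_region n p).mp (hT1 p hp)
  · rintro ⟨h1, h2⟩
    obtain ⟨q, hq, hqy⟩ := hT4 p.2 h2
    have hq1 := (base_region n q).mp (hT1 q hq)
    have : q = p := by rw [Prod.ext_iff]; omega
    rwa [← this]

noncomputable def baseEquiv (n : ℕ) :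
    {T : Finset (ℕ × ℕ) // IsSchroderTree (List.replicate n Step.N) T}
      ≃ {π : List Step // IsSmallSchroder (List.replicate n Step.N) π} where
  toFun _ := ⟨List.replicate n Step.N, base_path_is n⟩
  invFun _ := ⟨baseTree n, base_tree_is n⟩
  left_inv t := Subtype.ext (base_tree_unique n t.1 t.2).symm
  right_inv p := Subtype.ext (base_path_unique n p.1 p.2).symm

lemma decompNu (ν : List Step) (hD : Step.D ∉ ν) :
    (ν = List.replicate ν.length Step.N) ∨ ∃ β k, ν = nuFull β k := by
  induction ν using List.reverseRecOn with
  | nil => left; rfl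
  | append_singleton l s ihl =>
    have hDl : Step.D ∉ l := fun h => hD (List.mem_append.mpr (Or.inl h))
    cases s with
    | N =>
      rcases ihl hDl with h | ⟨β, k, h⟩
      · left
        rw [List.length_append, List.length_singleton]
        nth_rewrite 1 [h]
        rw [List.replicate_succ']
      · right
        refine ⟨β, k + 1, ?_⟩
        rw [h, nuFull, nuFull, List.replicate_succ']
        simp
    | E => exact Or.inr ⟨l, 0, by simp [nuFull]⟩
    | D => exact absurd (List.mem_append.mpr (Or.inr (List.mem_singleton.mpr rfl))) hD

lemma main_aux : ∀ (n : ℕ) (ν : List Step), ν.length ≤ n → Step.D ∉ ν →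
    Nonempty ({T : Finset (ℕ × ℕ) // IsSchroderTree ν T}
      ≃ {π : List Step // IsSmallSchroder ν π}) := by
  intro n
  induction n with
  | zero =>
    intro ν hlen _
    have : ν = [] := List.eq_nil_of_length_eq_zero (by omega)
    subst this
    exact ⟨baseEquiv 0⟩
  | succ n ih =>
    intro ν hlen hD
    rcases decompNu ν hD with h | ⟨β, k, rfl⟩
    · rw [h]; exact ⟨baseEquiv ν.length⟩
    · have hDβ : Step.D ∉ β := fun h => hD (by simp [nuFull]; tauto)
      have hlen' : (nuFull β k).length = β.length + 1 + k := by
        simp [nuFull]; omega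
      have IH : ∀ (x : PIdx (nLen β) k),
          Nonempty ({T : Finset (ℕ × ℕ) // IsSchroderTree (nuSub β (x.1.1 - nLen β)) T}
            ≃ {π : List Step // IsSmallSchroder (nuSub β (x.1.1 - nLen β)) π}) := by
        intro x
        apply ih
        · have hx := x.2
          have : (nuSub β (x.1.1 - nLen β)).length = β.length + (x.1.1 - nLen β) := by
            simp [nuSub]
          omega
        · intro hmem
          rw [nuSub, List.mem_append] at hmem
          rcases hmem with hm | hm
          · exact hDβ hm
          · exact absurd (List.eq_of_mem_replicate hm) (by simp)
      have F : ∀ (x : PIdx (nLen β) k),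
          {T : Finset (ℕ × ℕ) // IsSchroderTree (nuSub β (x.1.1 - nLen β)) T}
            ≃ {π : List Step // IsSmallSchroder (nuSub β (x.1.1 - nLen β)) π} :=
        fun x => (IH x).some
      exact ⟨((treeEquiv β k).symm.trans (Equiv.sigmaCongrRight F)).trans (pathEquiv β k)⟩

end Assembly

/-- There is a bijection between the set of ν-Schröder trees and the set of
ν-Schröder paths (given by the left-flushing and right-flushing maps). -/
theorem schroderTrees_equiv_schroderPaths (ν : List Step) (hν : IsLatticePath ν) :
    Nonempty ({T : Finset (ℕ × ℕ) // IsSchroderTree ν T}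
      ≃ {π : List Step // IsSmallSchroder ν π}) := by
  exact main_aux ν.length ν (le_refl _) hν
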